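/- (Helstrom) Let ρ, σ be density matrices on ℂⁿ and p ∈ [0,1]. For any POVM element 0 ≤ M ≤ 1, the success probability p·Tr(Mρ) + (1−p)·Tr((1−M)σ) of discriminating ρ (prior p) from σ (prior 1−p) is at most ½(1 + ‖pρ − (1−p)σ‖₁), and this bound is achieved by taking M to be the projection onto the nonnegative eigenspace of pρ − (1−p)σ. -/

import Mathlib

open Matrix
open scoped ComplexOrder

/-- The trace norm `‖A‖₁ = Tr √(Aᴴ A)` of a complex matrix. -/
noncomputable def traceNorm {n : ℕ} (A : Matrix (Fin n) (Fin n) ℂ) : ℝ :=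
  ((((Matrix.posSemidef_conjTranspose_mul_self A).1.eigenvectorUnitary : Matrix (Fin n) (Fin n) ℂ) *
    diagonal (((↑) : ℝ → ℂ) ∘ Real.sqrt ∘ (Matrix.posSemidef_conjTranspose_mul_self A).1.eigenvalues) *
    (star (Matrix.posSemidef_conjTranspose_mul_self A).1.eigenvectorUnitary :
      Matrix (Fin n) (Fin n) ℂ)).trace).re

section aux

variable {n : ℕ}

lemma star_unit_mul_self {U : Matrix.unitaryGroup (Fin n) ℂ} :
    star (U : Matrix (Fin n) (Fin n) ℂ) * U = 1 :=
  Unitary.coe_star_mul_self U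

lemma unit_mul_star_self {U : Matrix.unitaryGroup (Fin n) ℂ} :
    (U : Matrix (Fin n) (Fin n) ℂ) * star (U : Matrix (Fin n) (Fin n) ℂ) = 1 :=
  Unitary.coe_mul_star_self U

/-- Conjugating diagonal matrices multiplies them nicely. -/
lemma conj_diag_mul (U : Matrix.unitaryGroup (Fin n) ℂ) (d e : Fin n → ℂ) :
    ((U : Matrix (Fin n) (Fin n) ℂ) * diagonal d * star (U : Matrix (Fin n) (Fin n) ℂ)) *
      ((U : Matrix (Fin n) (Fin n) ℂ) * diagonal e * star (U : Matrix (Fin n) (Fin n) ℂ))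
    = (U : Matrix (Fin n) (Fin n) ℂ) * diagonal (fun i => d i * e i) * star (U : Matrix (Fin n) (Fin n) ℂ) := by
  rw [← diagonal_mul_diagonal]
  rw [show ∀ A B C D E : Matrix (Fin n) (Fin n) ℂ, (A*B*C)*(A*D*E) = A*B*(C*A)*D*E by
    intros; noncomm_ring]
  rw [star_unit_mul_self, mul_one]
  noncomm_ring

lemma conj_diag_trace (U : Matrix.unitaryGroup (Fin n) ℂ) (d : Fin n → ℂ) :
    ((U : Matrix (Fin n) (Fin n) ℂ) * diagonal d * star (U : Matrix (Fin n) (Fin n) ℂ)).trace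
      = ∑ i, d i := by
  rw [trace_mul_cycle, star_unit_mul_self, one_mul, trace_diagonal]

lemma conj_diag_posSemidef (U : Matrix.unitaryGroup (Fin n) ℂ) {d : Fin n → ℝ}
    (hd : ∀ i, 0 ≤ d i) :
    ((U : Matrix (Fin n) (Fin n) ℂ) * diagonal (fun i => (d i : ℂ)) *
      star (U : Matrix (Fin n) (Fin n) ℂ)).PosSemidef := by
  have h : (diagonal (fun i => (d i : ℂ))).PosSemidef :=
    posSemidef_diagonal_iff.mpr fun i => Complex.zero_le_real.mpr (hd i)
  simpa [Matrix.star_eq_conjTranspose] using h.mul_mul_conjTranspose_same (U : Matrix (Fin n) (Fin n) ℂ)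

lemma trace_mul_diag (N : Matrix (Fin n) (Fin n) ℂ) (d : Fin n → ℂ) :
    (N * diagonal d).trace = ∑ i, N i i * d i := by
  simp [Matrix.trace, Matrix.diag, mul_apply, diagonal]

end aux

/-- Helstrom's theorem: the success probability of discriminating the states
`ρ` (prior `p`) and `σ` (prior `1−p`) with a POVM element `0 ≤ M ≤ 1` is at
most `½(1 + ‖pρ − (1−p)σ‖₁)`, and the bound is achieved by the projection onto
the nonnegative eigenspace of `Δ = pρ − (1−p)σ`. -/
theorem helstrom {n : ℕ} (ρ σ : Matrix (Fin n) (Fin n) ℂ)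
    (hρ : ρ.PosSemidef) (hρ1 : ρ.trace = 1)
    (hσ : σ.PosSemidef) (hσ1 : σ.trace = 1)
    (p : ℝ) (hp : p ∈ Set.Icc (0 : ℝ) 1) :
    (∀ M : Matrix (Fin n) (Fin n) ℂ, M.PosSemidef → (1 - M).PosSemidef →
      p * ((M * ρ).trace).re + (1 - p) * (((1 - M) * σ).trace).re ≤
        (1 + traceNorm ((p : ℂ) • ρ - ((1 - p : ℝ) : ℂ) • σ)) / 2) ∧
    (∃ M₀ : Matrix (Fin n) (Fin n) ℂ, M₀ᴴ = M₀ ∧ M₀ * M₀ = M₀ ∧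
      (M₀ * ((p : ℂ) • ρ - ((1 - p : ℝ) : ℂ) • σ)).PosSemidef ∧
      ((M₀ - 1) * ((p : ℂ) • ρ - ((1 - p : ℝ) : ℂ) • σ)).PosSemidef ∧
      p * ((M₀ * ρ).trace).re + (1 - p) * (((1 - M₀) * σ).trace).re =
        (1 + traceNorm ((p : ℂ) • ρ - ((1 - p : ℝ) : ℂ) • σ)) / 2) := by
  obtain ⟨hp0, hp1⟩ := hp
  set Δ : Matrix (Fin n) (Fin n) ℂ := (p : ℂ) • ρ - ((1 - p : ℝ) : ℂ) • σ with hΔdef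
  have hΔ : Δ.IsHermitian := by
    show Δᴴ = Δ
    simp [hΔdef, sub_eq_add_neg, conjTranspose_smul, hρ.1.eq, hσ.1.eq, Complex.star_def,
      Complex.conj_ofReal]
  set U := hΔ.eigenvectorUnitary with hU
  set lam := hΔ.eigenvalues with hlam
  have hspec : Δ = (U : Matrix (Fin n) (Fin n) ℂ) *
      diagonal (fun i => (lam i : ℂ)) * star (U : Matrix (Fin n) (Fin n) ℂ) := by
    simpa [Function.comp_def] using hΔ.spectral_theorem
  -- trace of Δ
  have htrΔ : ∑ i, lam i = 2 * p - 1 := by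
    have h1 : Δ.trace = ((2 * p - 1 : ℝ) : ℂ) := by
      simp only [hΔdef, trace_sub, trace_smul, hρ1, hσ1, smul_eq_mul, mul_one]
      push_cast; ring
    have h2 : Δ.trace = ∑ i, (lam i : ℂ) := by rw [hspec, conj_diag_trace]
    have h3 : ((∑ i, lam i : ℝ) : ℂ) = ((2 * p - 1 : ℝ) : ℂ) := by
      push_cast; rw [← h2, h1]; push_cast; ring
    exact_mod_cast h3
  -- trace norm of Δ
  have hTN : traceNorm Δ = ∑ i, |lam i| := by
    set B := (U : Matrix (Fin n) (Fin n) ℂ) * diagonal (fun i => ((|lam i| : ℝ) : ℂ)) *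
      star (U : Matrix (Fin n) (Fin n) ℂ) with hBdef
    have hB : B.PosSemidef := conj_diag_posSemidef U fun i => abs_nonneg _
    have hsq : B ^ 2 = Δᴴ * Δ := by
      rw [hΔ.eq, pow_two, hBdef, hspec, conj_diag_mul, conj_diag_mul]
      have habs : (fun i => ((|lam i| : ℝ) : ℂ) * ((|lam i| : ℝ) : ℂ)) =
          fun i => ((lam i : ℝ) : ℂ) * ((lam i : ℝ) : ℂ) := by
        funext i; norm_cast; exact abs_mul_abs_self _
      rw [habs]
    have hBs : B = ((posSemidef_conjTranspose_mul_self Δ).1.eigenvectorUnitary : Matrix (Fin n) (Fin n) ℂ) *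
        diagonal (((↑) : ℝ → ℂ) ∘ Real.sqrt ∘ (posSemidef_conjTranspose_mul_self Δ).1.eigenvalues) *
        (star (posSemidef_conjTranspose_mul_self Δ).1.eigenvectorUnitary :
          Matrix (Fin n) (Fin n) ℂ) := by
      have hsa : IsSelfAdjoint Δ := hΔ
      have e1 : B = cfc (fun x : ℝ => |x|) Δ := by
        rw [hΔ.cfc_eq, IsHermitian.cfc, Unitary.conjStarAlgAut_apply]; rfl
      have e2 : ((posSemidef_conjTranspose_mul_self Δ).1.eigenvectorUnitary : Matrix (Fin n) (Fin n) ℂ) *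
          diagonal (((↑) : ℝ → ℂ) ∘ Real.sqrt ∘ (posSemidef_conjTranspose_mul_self Δ).1.eigenvalues) *
          (star (posSemidef_conjTranspose_mul_self Δ).1.eigenvectorUnitary :
            Matrix (Fin n) (Fin n) ℂ) = cfc Real.sqrt (Δᴴ * Δ) := by
        rw [(posSemidef_conjTranspose_mul_self Δ).1.cfc_eq, IsHermitian.cfc, Unitary.conjStarAlgAut_apply]; rfl
      have e3 : Δᴴ * Δ = cfc (fun x : ℝ => x * x) Δ := by
        rw [cfc_mul (fun x : ℝ => x) (fun x : ℝ => x) Δ, cfc_id' ℝ Δ, hΔ.eq]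
      rw [e1, e2, e3, ← cfc_comp Real.sqrt (fun x : ℝ => x * x) Δ]
      exact cfc_congr (fun x _ => (Real.sqrt_mul_self_eq_abs x).symm)
    rw [traceNorm, ← hBs, hBdef, conj_diag_trace]
    rw [show (∑ i, ((|lam i| : ℝ) : ℂ)) = ((∑ i, |lam i| : ℝ) : ℂ) by push_cast; ring]
    exact Complex.ofReal_re _
  -- key algebraic identity for the success probability
  have key : ∀ M : Matrix (Fin n) (Fin n) ℂ,
      p * ((M * ρ).trace).re + (1 - p) * (((1 - M) * σ).trace).re
        = (1 - p) + ((M * Δ).trace).re := by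
    intro M
    have h1 : (M * Δ).trace = (p : ℂ) * (M * ρ).trace - ((1 - p : ℝ) : ℂ) * (M * σ).trace := by
      simp [hΔdef, mul_sub, Matrix.mul_smul, trace_sub, trace_smul, smul_eq_mul]
    have h2 : ((1 - M) * σ).trace = 1 - (M * σ).trace := by
      simp [Matrix.sub_mul, trace_sub, hσ1]
    rw [h1, h2]
    simp [Complex.sub_re, Complex.one_re, Complex.re_ofReal_mul]
    ring
  -- trace against Δ in the eigenbasis
  have htrM : ∀ M : Matrix (Fin n) (Fin n) ℂ,
      ((M * Δ).trace) = ∑ i, (lam i : ℂ) *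
        ((star (U : Matrix (Fin n) (Fin n) ℂ) * M * U) i i) := by
    intro M
    rw [hspec, show M * ((U : Matrix (Fin n) (Fin n) ℂ) * diagonal (fun i => (lam i : ℂ)) *
        star (U : Matrix (Fin n) (Fin n) ℂ)) =
        (M * U) * (diagonal (fun i => (lam i : ℂ)) * star (U : Matrix (Fin n) (Fin n) ℂ)) by
      noncomm_ring]
    rw [trace_mul_comm, show diagonal (fun i => (lam i : ℂ)) *
        star (U : Matrix (Fin n) (Fin n) ℂ) * (M * ↑U) =
        diagonal (fun i => (lam i : ℂ)) * (star (U : Matrix (Fin n) (Fin n) ℂ) * M * ↑U) by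
      noncomm_ring]
    rw [trace_mul_comm, trace_mul_diag]
    exact Finset.sum_congr rfl fun i _ => mul_comm _ _
  -- diagonal entries of PSD matrices are nonneg reals
  have diagPSD : ∀ {A : Matrix (Fin n) (Fin n) ℂ}, A.PosSemidef → ∀ i, 0 ≤ A i i := by
    intro A hA i
    exact hA.diag_nonneg
  constructor
  · -- the bound
    intro M hM hM'
    rw [key M, hTN, htrM M]
    set N := star (U : Matrix (Fin n) (Fin n) ℂ) * M * U with hN
    have hNpsd : N.PosSemidef := by
      simpa [hN, conjTranspose_mul, Matrix.mul_assoc, Matrix.star_eq_conjTranspose] using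
        hM.conjTranspose_mul_mul_same (U : Matrix (Fin n) (Fin n) ℂ)
    have hN1 : (1 - N).PosSemidef := by
      have h := hM'.conjTranspose_mul_mul_same (U : Matrix (Fin n) (Fin n) ℂ)
      have e : (U : Matrix (Fin n) (Fin n) ℂ)ᴴ * (1 - M) * U = 1 - N := by
        rw [Matrix.mul_sub, Matrix.sub_mul, Matrix.mul_one]
        rw [show (U : Matrix (Fin n) (Fin n) ℂ)ᴴ = star (U : Matrix (Fin n) (Fin n) ℂ) from rfl,
          star_unit_mul_self, hN]
      rwa [e] at h
    have hdiag : ∀ i, 0 ≤ (N i i).re ∧ (N i i).re ≤ 1 := by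
      intro i
      constructor
      · exact (Complex.nonneg_iff.mp (diagPSD hNpsd i)).1
      · have := (Complex.nonneg_iff.mp (diagPSD hN1 i)).1
        simp only [Matrix.sub_apply, Matrix.one_apply_eq, Complex.sub_re, Complex.one_re] at this
        linarith
    have him : ∀ i, (N i i).im = 0 := fun i => ((Complex.nonneg_iff.mp (diagPSD hNpsd i)).2).symm
    have hre : (∑ i, (lam i : ℂ) * N i i).re = ∑ i, lam i * (N i i).re := by
      rw [Complex.re_sum]
      exact Finset.sum_congr rfl fun i _ => by
        simp [Complex.mul_re, him i]
    rw [hre]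
    have hbound : ∑ i, lam i * (N i i).re ≤ ∑ i, max (lam i) 0 := by
      apply Finset.sum_le_sum
      intro i _
      rcases le_or_gt 0 (lam i) with h | h
      · calc lam i * (N i i).re ≤ lam i * 1 :=
              mul_le_mul_of_nonneg_left (hdiag i).2 h
          _ = lam i := mul_one _
          _ ≤ max (lam i) 0 := le_max_left _ _
      · calc lam i * (N i i).re ≤ 0 :=
              mul_nonpos_of_nonpos_of_nonneg h.le (hdiag i).1
          _ ≤ max (lam i) 0 := le_max_right _ _
    have hmaxsum : ∑ i, max (lam i) 0 = ((2 * p - 1) + ∑ i, |lam i|) / 2 := by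
      rw [← htrΔ, ← Finset.sum_add_distrib, Finset.sum_div]
      refine Finset.sum_congr rfl fun i _ => ?_
      rcases le_or_gt 0 (lam i) with h | h
      · rw [max_eq_left h, abs_of_nonneg h]; ring
      · rw [max_eq_right h.le, abs_of_neg h]; ring
    linarith [hbound, hmaxsum.le, hmaxsum.ge]
  · -- the optimal measurement
    set e : Fin n → ℝ := fun i => if 0 ≤ lam i then 1 else 0 with he
    set M₀ := (U : Matrix (Fin n) (Fin n) ℂ) * diagonal (fun i => ((e i : ℝ) : ℂ)) *
      star (U : Matrix (Fin n) (Fin n) ℂ) with hM₀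
    refine ⟨M₀, ?_, ?_, ?_, ?_, ?_⟩
    · have hd : (diagonal (fun i => ((e i : ℝ) : ℂ)))ᴴ = diagonal (fun i => ((e i : ℝ) : ℂ)) := by
        rw [diagonal_conjTranspose,
          show (star fun i => ((e i : ℝ) : ℂ)) = fun i => ((e i : ℝ) : ℂ) from
            funext fun i => by simp [Pi.star_apply, Complex.star_def, Complex.conj_ofReal]]
      rw [hM₀, Matrix.star_eq_conjTranspose, conjTranspose_mul, conjTranspose_mul, hd,
        conjTranspose_conjTranspose, Matrix.mul_assoc]
    · rw [hM₀, conj_diag_mul]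
      have hee : (fun i => ((e i : ℝ) : ℂ) * ((e i : ℝ) : ℂ)) = fun i => ((e i : ℝ) : ℂ) := by
        funext i
        simp only [he]
        split_ifs <;> norm_num
      rw [hee]
    · rw [hM₀, hspec, conj_diag_mul]
      have hel : (fun i => ((e i : ℝ) : ℂ) * (lam i : ℂ)) = fun i => ((e i * lam i : ℝ) : ℂ) := by
        funext i; push_cast; ring
      rw [hel]
      refine conj_diag_posSemidef U fun i => ?_
      simp only [he]
      split_ifs with h
      · simpa using h
      · simp
    · have hone : (1 : Matrix (Fin n) (Fin n) ℂ) = (U : Matrix (Fin n) (Fin n) ℂ) *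
          diagonal (fun _ => (1 : ℂ)) * star (U : Matrix (Fin n) (Fin n) ℂ) := by
        rw [diagonal_one, Matrix.mul_one, unit_mul_star_self]
      rw [hM₀, hspec]
      rw [show (U : Matrix (Fin n) (Fin n) ℂ) * diagonal (fun i => ((e i : ℝ) : ℂ)) *
          star (U : Matrix (Fin n) (Fin n) ℂ) - 1 =
          (U : Matrix (Fin n) (Fin n) ℂ) * diagonal (fun i => ((e i : ℝ) : ℂ) - 1) *
          star (U : Matrix (Fin n) (Fin n) ℂ) by
        conv_lhs => rw [hone]
        rw [← Matrix.sub_mul, ← Matrix.mul_sub]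
        congr 2
        rw [← diagonal_sub]]
      rw [conj_diag_mul]
      have hel : (fun i => (((e i : ℝ) : ℂ) - 1) * (lam i : ℂ)) =
          fun i => (((e i - 1) * lam i : ℝ) : ℂ) := by
        funext i; push_cast; ring
      rw [hel]
      refine conj_diag_posSemidef U fun i => ?_
      simp only [he]
      split_ifs with h
      · simp
      · push_neg at h; nlinarith
    · rw [key M₀, hTN, htrM M₀]
      have hNM₀ : star (U : Matrix (Fin n) (Fin n) ℂ) * M₀ * U =
          diagonal (fun i => ((e i : ℝ) : ℂ)) := by
        rw [hM₀, show star (U : Matrix (Fin n) (Fin n) ℂ) *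
            ((U : Matrix (Fin n) (Fin n) ℂ) * diagonal (fun i => ((e i : ℝ) : ℂ)) *
              star (U : Matrix (Fin n) (Fin n) ℂ)) * (U : Matrix (Fin n) (Fin n) ℂ) =
            (star (U : Matrix (Fin n) (Fin n) ℂ) * (U : Matrix (Fin n) (Fin n) ℂ)) *
              diagonal (fun i => ((e i : ℝ) : ℂ)) *
              (star (U : Matrix (Fin n) (Fin n) ℂ) * (U : Matrix (Fin n) (Fin n) ℂ)) by
          noncomm_ring, star_unit_mul_self, Matrix.one_mul, Matrix.mul_one]
      rw [hNM₀]
      have hsum2 : (∑ i, (lam i : ℂ) * diagonal (fun i => ((e i : ℝ) : ℂ)) i i) =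
          ((∑ i, lam i * e i : ℝ) : ℂ) := by
        push_cast
        exact Finset.sum_congr rfl fun i _ => by simp [diagonal_apply_eq]
      rw [hsum2, Complex.ofReal_re]
      have hsum : ∑ i, lam i * e i = ((2 * p - 1) + ∑ i, |lam i|) / 2 := by
        rw [← htrΔ, ← Finset.sum_add_distrib, Finset.sum_div]
        refine Finset.sum_congr rfl fun i _ => ?_
        simp only [he]
        split_ifs with h
        · rw [abs_of_nonneg h]; ring
        · push_neg at h; rw [abs_of_neg h]; ring
      rw [hsum]; ring
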